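/- For every n ≥ 0 and every P ∈ D_n^{h,≥}, the number of occurrences of the factor UDD in P equals the total number of occurrences of the factors FD, UD, FUU and FUF in φ(P). -/
import Mathlib


inductive Step : Type
  | U | D | F
  deriving DecidableEq, Repr

open Step

/-- Number of occurrences of `p` as a factor (consecutive steps) of `w`. -/
def countFactor (p w : List Step) : ℕ :=
  w.tails.countP fun t => p.isPrefixOf t

/-- `w` is a Dyck path (word over {U,D} with as many U's as D's,
every prefix having at least as many U's as D's). -/
def IsDyck (w : List Step) : Prop :=
  w.count F = 0 ∧ w.count U = w.count D ∧
    ∀ p : List Step, p <+: w → p.count D ≤ p.count U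

/-- `w` is a Motzkin path. -/
def IsMotzkin (w : List Step) : Prop :=
  w.count U = w.count D ∧ ∀ p : List Step, p <+: w → p.count D ≤ p.count U

/-- The (maximal) height of a path. -/
def height (w : List Step) : ℕ :=
  (w.inits.map fun p => p.count U - p.count D).foldr max 0

/-- The set `D^{h,≥}` of Dyck paths with first return decomposition
`P = U α D β` satisfying `h(UαD) ≥ h(β)`, recursively. -/
inductive DH : List Step → Prop
  | nil : DH []
  | cons (α β : List Step) : DH α → DH β →
      height (U :: (α ++ [D])) ≥ height β → DH (U :: (α ++ [D] ++ β))

/-- The map φ from `D^{h,≥}` to Motzkin paths, as a relation: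
φ(ε)=ε, φ(αUD)=φ(α)F, φ(αUUβDγD)=φ(α)φ(γ)Uφ(β)D. -/
inductive Phi : List Step → List Step → Prop
  | nil : Phi [] []
  | flat (α a : List Step) : DH α → Phi α a →
      Phi (α ++ [U, D]) (a ++ [F])
  | up (α β γ a b c : List Step) : DH α → DH β → DH γ →
      Phi α a → Phi β b → Phi γ c →
      Phi (α ++ [U, U] ++ β ++ [D] ++ γ ++ [D]) (a ++ c ++ U :: (b ++ [D]))

/-- Auxiliary: the list starts with one or more `F`'s followed by a `D`. -/
def fThenD : List Step → Bool
  | F :: D :: _ => true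
  | F :: rest => fThenD rest
  | _ => false

/-- Auxiliary: the list starts with one or more `F`'s followed by a `U`. -/
def fThenU : List Step → Bool
  | F :: U :: _ => true
  | F :: rest => fThenU rest
  | _ => false

/-- Number of occurrences of factors of the form `U F^k D` with `k ≥ 1` in `w`. -/
def countUFD (w : List Step) : ℕ :=
  w.tails.countP fun t => match t with
    | U :: rest => fThenD rest
    | _ => false

/-- Number of occurrences of factors of the form `U F^k U` with `k ≥ 1` in `w`. -/
def countUFU (w : List Step) : ℕ :=
  w.tails.countP fun t => match t with
    | U :: rest => fThenU rest
    | _ => false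

lemma cf_cons (p : List Step) (x : Step) (w : List Step) :
    countFactor p (x :: w) = (if p.isPrefixOf (x :: w) then 1 else 0) + countFactor p w := by
  simp [countFactor, List.tails_cons, List.countP_cons]
  split <;> omega

lemma isPrefixOf_append_of_le (p l v : List Step) (h : p.length ≤ l.length) :
    p.isPrefixOf (l ++ v) = p.isPrefixOf l := by
  rw [Bool.eq_iff_iff, List.isPrefixOf_iff_prefix, List.isPrefixOf_iff_prefix]
  constructor
  · intro hp
    exact List.prefix_of_prefix_length_le hp (List.prefix_append l v) h
  · intro hp
    exact hp.trans (List.prefix_append l v)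

lemma cf_append_gen (p s v : List Step)
    (H : ∀ (y : Step) (t : List Step),
      p.isPrefixOf (y :: (t ++ s ++ v)) = p.isPrefixOf (y :: (t ++ s))) :
    ∀ w, countFactor p ((w ++ s) ++ v) + countFactor p s
        = countFactor p (w ++ s) + countFactor p (s ++ v) := by
  intro w
  induction w with
  | nil => simp [add_comm]
  | cons x w ih =>
      have e1 : ((x :: w) ++ s) ++ v = x :: ((w ++ s) ++ v) := by simp
      have e2 : (x :: w) ++ s = x :: (w ++ s) := by simp
      rw [e1, e2, cf_cons, cf_cons]
      have e3 : (w ++ s) ++ v = w ++ s ++ v := by simp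
      rw [e3]
      rw [H x w]
      omega

lemma cf_append₂ (p s v : List Step) (h : p.length ≤ s.length + 1) (w : List Step) :
    countFactor p ((w ++ s) ++ v) + countFactor p s
      = countFactor p (w ++ s) + countFactor p (s ++ v) := by
  apply cf_append_gen
  intro y t
  have : (y :: (t ++ s ++ v)) = (y :: (t ++ s)) ++ v := by simp
  rw [this, isPrefixOf_append_of_le]
  simp; omega

lemma suffix_eq_of_length {s₁ s₂ w : List Step} (h₁ : s₁ <:+ w) (h₂ : s₂ <:+ w)
    (hl : s₁.length = s₂.length) : s₁ = s₂ := by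
  obtain ⟨t₁, e₁⟩ := h₁
  obtain ⟨t₂, e₂⟩ := h₂
  rw [← e₂] at e₁
  exact (List.append_inj e₁ (by
    have := congrArg List.length e₁
    simp at this; omega)).2

lemma suffix_of_suffix_length_le {s₁ s₂ w : List Step} (h₁ : s₁ <:+ w) (h₂ : s₂ <:+ w)
    (hl : s₁.length ≤ s₂.length) : s₁ <:+ s₂ := by
  rw [← List.reverse_prefix] at h₁ h₂ ⊢
  exact List.prefix_of_prefix_length_le h₁ h₂ (by simpa)

lemma prefix_append_cases {p x y : List Step} (h : p <+: x ++ y) :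
    p <+: x ∨ ∃ q, q <+: y ∧ p = x ++ q := by
  rcases le_or_gt p.length x.length with hle | hlt
  · exact Or.inl (List.prefix_of_prefix_length_le h (List.prefix_append x y) hle)
  · right
    refine ⟨p.drop x.length, ?_, ?_⟩
    · obtain ⟨t, ht⟩ := h
      have : p.drop x.length <+: (x ++ y).drop x.length := by
        rw [← ht]; exact ⟨t.drop 0, by rw [← List.drop_append_of_le_length (by omega)]; simp [ht]⟩
      simpa using this
    · obtain ⟨t, ht⟩ := h
      have hx : List.take x.length p = x := by
        have := congrArg (List.take x.length) ht
        rw [List.take_append_of_le_length (by omega)] at this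
        rw [this, List.take_append_of_le_length (le_refl _)]
        simp
      rw [← hx]
      have hlen : (List.take x.length p).length = x.length := by
        simp; omega
      rw [hlen]
      exact (List.take_append_drop x.length p).symm

lemma le_foldr_max (l : List ℕ) (x : ℕ) (h : x ∈ l) : x ≤ l.foldr max 0 := by
  induction l with
  | nil => simp at h
  | cons y l ih =>
      simp only [List.foldr_cons]
      rcases List.mem_cons.1 h with h | h
      · subst h; omega
      · have := ih h; omega

lemma foldr_max_le (l : List ℕ) (n : ℕ) (h : ∀ x ∈ l, x ≤ n) : l.foldr max 0 ≤ n := by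
  induction l with
  | nil => simp
  | cons y l ih =>
      simp only [List.foldr_cons]
      have := h y (by simp)
      have := ih (fun x hx => h x (by simp [hx]))
      omega

lemma count_le_height {p w : List Step} (h : p <+: w) :
    p.count U - p.count D ≤ height w := by
  apply le_foldr_max
  exact List.mem_map.2 ⟨p, (List.mem_inits _ _).2 h, rfl⟩

lemma height_le_of_balanced_append (B Q : List Step) (hB : B.count U = B.count D) :
    height Q ≤ height (B ++ Q) := by
  apply foldr_max_le
  intro x hx
  obtain ⟨p, hp, rfl⟩ := List.mem_map.1 hx
  have hpQ : p <+: Q := (List.mem_inits _ _).1 hp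
  have hp' : B ++ p <+: B ++ Q := ⟨hpQ.choose, by
    rw [List.append_assoc]; congr 1; exact hpQ.choose_spec⟩
  have := count_le_height hp'
  simp [List.count_append] at this ⊢
  omega

lemma height_two_le {w : List Step} (h : [U, U] <+: w) : 2 ≤ height w := by
  have := count_le_height h
  simpa using this

lemma dh_balanced {w : List Step} (h : DH w) :
    w.count U = w.count D ∧ ∀ p : List Step, p <+: w → p.count D ≤ p.count U := by
  induction h with
  | nil => exact ⟨rfl, by intro p hp; simp [List.prefix_nil.1 hp]⟩
  | cons α β hα hβ hh ihα ihβ =>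
      obtain ⟨bα, pα⟩ := ihα
      obtain ⟨bβ, pβ⟩ := ihβ
      constructor
      · simp [List.count_append, List.count_cons]
        omega
      · intro p hp
        rcases p with _ | ⟨x, p⟩
        · simp
        · rcases List.cons_prefix_cons.1 hp with ⟨rfl, hp'⟩
          rcases prefix_append_cases hp' with h1 | ⟨q, hq, rfl⟩
          · rcases prefix_append_cases h1 with h2 | ⟨r, hr, rfl⟩
            · have := pα _ h2
              simp [List.count_cons]; omega
            · have := pα α (List.prefix_refl α)
              rcases r with _ | ⟨z, r⟩
              · simp [List.count_append, List.count_cons]; omega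
              · rcases List.cons_prefix_cons.1 hr with ⟨rfl, hr2⟩
                rw [List.prefix_nil.1 hr2]
                simp [List.count_append, List.count_cons]; omega
          · have := pβ _ hq
            have := pα α (List.prefix_refl α)
            simp [List.count_append, List.count_cons]; omega

lemma dh_head {w : List Step} (h : DH w) : w = [] ∨ ∃ t, w = U :: t := by
  cases h with
  | nil => exact Or.inl rfl
  | cons α β _ _ _ => exact Or.inr ⟨_, rfl⟩

lemma dh_len2 {w : List Step} (h : DH w) (hne : w ≠ []) : 2 ≤ w.length := by
  cases h with
  | nil => exact absurd rfl hne
  | cons α β _ _ _ => simp; omega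

lemma dh_lastD {w : List Step} (h : DH w) (hne : w ≠ []) : [D] <:+ w := by
  induction h with
  | nil => exact absurd rfl hne
  | cons α β hα hβ hh ihα ihβ =>
      rcases eq_or_ne β [] with rfl | hβne
      · exact ⟨U :: α, by simp⟩
      · obtain ⟨t, ht⟩ := ihβ hβne
        exact ⟨U :: (α ++ [D]) ++ t, by rw [← ht]; simp⟩

lemma dh_last2 {w : List Step} (h : DH w) :
    w = [] ∨ [U, D] <:+ w ∨ [D, D] <:+ w := by
  induction h with
  | nil => exact Or.inl rfl
  | cons α β hα hβ hh ihα ihβ =>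
      rcases eq_or_ne β [] with rfl | hβne
      · rcases eq_or_ne α [] with rfl | hαne
        · exact Or.inr (Or.inl ⟨[], by simp⟩)
        · obtain ⟨t, ht⟩ := dh_lastD hα hαne
          refine Or.inr (Or.inr ⟨U :: t, ?_⟩)
          rw [show (U :: t) ++ [D, D] = U :: ((t ++ [D]) ++ [D] ++ []) by simp, ht]
      · rcases ihβ with rfl | h2 | h2
        · exact absurd rfl hβne
        · obtain ⟨t, ht⟩ := h2
          exact Or.inr (Or.inl ⟨U :: (α ++ [D]) ++ t, by rw [← ht]; simp⟩)
        · obtain ⟨t, ht⟩ := h2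
          exact Or.inr (Or.inr ⟨U :: (α ++ [D]) ++ t, by rw [← ht]; simp⟩)

lemma balanced_split_unique_aux {α β A B : List Step}
    (he : (α ++ [D]) ++ β = (A ++ [D]) ++ B)
    (hbα : α.count U = α.count D)
    (hpA : ∀ p : List Step, p <+: A → p.count D ≤ p.count U)
    (hl : α.length ≤ A.length) : α = A := by
  rcases eq_or_lt_of_le hl with heq | hlt
  · have he' : α ++ ([D] ++ β) = A ++ ([D] ++ B) := by simpa [List.append_assoc] using he
    exact (List.append_inj he' heq).1
  · exfalso
    have htake : α ++ [D] <+: A := by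
      have h1 : List.take (α.length + 1) ((α ++ [D]) ++ β) = α ++ [D] := by
        rw [List.take_append_of_le_length (by simp)]
        simp
      have h2 : List.take (α.length + 1) ((A ++ [D]) ++ B) = List.take (α.length + 1) A := by
        rw [List.take_append_of_le_length (by simp; omega),
            List.take_append_of_le_length (by omega)]
      rw [he, h2] at h1
      rw [← h1]
      exact List.take_prefix _ _
    have := hpA _ htake
    simp [List.count_append] at this
    omega

lemma balanced_split_unique {α β A B : List Step}
    (he : (α ++ [D]) ++ β = (A ++ [D]) ++ B)
    (hbα : α.count U = α.count D)
    (hpα : ∀ p : List Step, p <+: α → p.count D ≤ p.count U)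
    (hbA : A.count U = A.count D)
    (hpA : ∀ p : List Step, p <+: A → p.count D ≤ p.count U) :
    α = A ∧ β = B := by
  rcases le_total α.length A.length with hl | hl
  · have h1 := balanced_split_unique_aux he hbα hpA hl
    subst h1
    exact ⟨rfl, by simpa using he⟩
  · have h1 := balanced_split_unique_aux he.symm hbA hpα hl
    subst h1
    exact ⟨rfl, by simpa using he⟩

lemma dh_inv {A B : List Step} (h : DH (U :: ((A ++ [D]) ++ B)))
    (hbal : A.count U = A.count D)
    (hpos : ∀ p : List Step, p <+: A → p.count D ≤ p.count U) :
    DH A ∧ DH B ∧ height (U :: (A ++ [D])) ≥ height B := by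
  generalize hE : (U :: ((A ++ [D]) ++ B)) = w at h
  cases h with
  | nil => simp at hE
  | cons α β hα hβ hh =>
      have he : (α ++ [D]) ++ β = (A ++ [D]) ++ B := by
        have := hE
        simp only [List.cons.injEq] at this
        exact this.2.symm
      obtain ⟨hb, hp⟩ := dh_balanced hα
      obtain ⟨h1, h2⟩ := balanced_split_unique he hb hp hbal hpos
      subst h1; subst h2
      exact ⟨hα, hβ, hh⟩

lemma dh_split_aux : ∀ n (w Q : List Step), w.length ≤ n → DH (w ++ Q) → DH w →
    DH Q ∧ ([U, D] <:+ w → height Q ≤ 1) := by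
  intro n
  induction n with
  | zero =>
      intro w Q hlen hwQ hw
      have : w = [] := List.length_eq_zero_iff.1 (by omega)
      subst this
      refine ⟨by simpa using hwQ, fun hs => ?_⟩
      have := hs.length_le
      simp at this
  | succ n ih =>
      intro w Q hlen hwQ hw
      cases hw with
      | nil =>
          refine ⟨by simpa using hwQ, fun hs => ?_⟩
          have := hs.length_le
          simp at this
      | cons A B hA hB hh =>
          have hwQ' : DH (U :: ((A ++ [D]) ++ (B ++ Q))) := by
            have : (U :: ((A ++ [D]) ++ B)) ++ Q = U :: ((A ++ [D]) ++ (B ++ Q)) := by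
              simp [List.append_assoc]
            rwa [this] at hwQ
          obtain ⟨bA, pA⟩ := dh_balanced hA
          obtain ⟨_, hBQ, hhQ⟩ := dh_inv hwQ' bA pA
          have hlB : B.length ≤ n := by
            have := hlen
            simp at this
            omega
          obtain ⟨hQ, hbound⟩ := ih B Q hlB hBQ hB
          refine ⟨hQ, fun hsuf => ?_⟩
          rcases eq_or_ne B [] with rfl | hBne
          · rcases eq_or_ne A [] with rfl | hAne
            · have h1 : height Q ≤ height [U, D] := by simpa using hhQ
              have h2 : height [U, D] = 1 := by decide
              omega
            · exfalso
              obtain ⟨t, ht⟩ := dh_lastD hA hAne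
              have hdd : [D, D] <:+ U :: ((A ++ [D]) ++ []) := by
                refine ⟨U :: t, ?_⟩
                rw [← ht]
                simp
              have := suffix_eq_of_length hsuf hdd rfl
              simp at this
          · have hBw : B <:+ U :: ((A ++ [D]) ++ B) := ⟨U :: (A ++ [D]), by simp⟩
            have h2 : [U, D] <:+ B :=
              suffix_of_suffix_length_le hsuf hBw (by
                have := dh_len2 hB hBne
                simpa using this)
            exact hbound h2

lemma dh_split {w Q : List Step} (hwQ : DH (w ++ Q)) (hw : DH w) :
    DH Q ∧ ([U, D] <:+ w → height Q ≤ 1) :=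
  dh_split_aux w.length w Q le_rfl hwQ hw

lemma dh_height1 {w : List Step} (h : DH w) (hh : height w ≤ 1) (hne : w ≠ []) :
    [U, D] <:+ w := by
  induction h with
  | nil => exact absurd rfl hne
  | cons A B hA hB hhAB ihA ihB =>
      rcases dh_head hA with rfl | ⟨t, rfl⟩
      · rcases eq_or_ne B [] with rfl | hBne
        · exact ⟨[], by simp⟩
        · have hBsuf : B <:+ U :: (([] ++ [D]) ++ B) := ⟨[U, D], by simp⟩
          have hB1 : height B ≤ 1 := by
            have h1 : height B ≤ height ([U, D] ++ B) := by
              apply height_le_of_balanced_append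
              decide
            have h2 : ([U, D] ++ B) = U :: (([] ++ [D]) ++ B) := by simp
            rw [h2] at h1
            omega
          exact (ihB hB1 hBne).trans hBsuf
      · exfalso
        have : [U, U] <+: U :: (((U :: t) ++ [D]) ++ B) := ⟨t ++ [D] ++ B, by simp⟩
        have := height_two_le this
        omega

lemma phi_nil {P m : List Step} (h : Phi P m) : P = [] ↔ m = [] := by
  cases h <;> simp

lemma phi_lastD {P m : List Step} (h : Phi P m) : m = [] ∨ [F] <:+ m ∨ [D] <:+ m := by
  cases h with
  | nil => exact Or.inl rfl
  | flat α a _ _ => exact Or.inr (Or.inl ⟨a, rfl⟩)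
  | up α β γ a b c _ _ _ _ _ _ =>
      exact Or.inr (Or.inr ⟨a ++ c ++ U :: b, by simp⟩)

lemma phi_lastF {P m : List Step} (h : Phi P m) : ([F] <:+ m ↔ [U, D] <:+ P) := by
  cases h with
  | nil =>
      constructor <;> intro hs <;> (exfalso; have := hs.length_le; simp at this)
  | flat α a _ _ =>
      constructor <;> intro _
      · exact ⟨α, rfl⟩
      · exact ⟨a, rfl⟩
  | up α β γ a b c _ _ hγ _ _ _ =>
      constructor <;> intro hs <;> exfalso
      · have hD : [D] <:+ a ++ c ++ U :: (b ++ [D]) := ⟨a ++ c ++ U :: b, by simp⟩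
        have := suffix_eq_of_length hs hD rfl
        simp at this
      · have hDD : [D, D] <:+ α ++ [U, U] ++ β ++ [D] ++ γ ++ [D] := by
          rcases dh_head hγ with rfl | ⟨t, rfl⟩
          · exact ⟨α ++ [U, U] ++ β, by simp⟩
          · obtain ⟨s, hsy⟩ := dh_lastD hγ (by simp)
            refine ⟨α ++ [U, U] ++ β ++ [D] ++ s, ?_⟩
            have : U :: t = s ++ [D] := hsy.symm
            rw [show α ++ [U,U] ++ β ++ [D] ++ (U :: t) ++ [D] = α ++ [U,U] ++ β ++ [D] ++ (s ++ [D]) ++ [D] by rw [← this]]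
            simp
        have := suffix_eq_of_length hs hDD rfl
        simp at this

lemma phi_head {P m : List Step} (h : Phi P m) :
    m = [] ∨ (∃ t, m = F :: t) ∨ (∃ t, m = U :: t) := by
  induction h with
  | nil => exact Or.inl rfl
  | flat α a _ _ ih =>
      rcases ih with rfl | ⟨t, rfl⟩ | ⟨t, rfl⟩
      · exact Or.inr (Or.inl ⟨[], rfl⟩)
      · exact Or.inr (Or.inl ⟨t ++ [F], by simp⟩)
      · exact Or.inr (Or.inr ⟨t ++ [F], by simp⟩)
  | up α β γ a b c _ _ _ _ _ _ iha ihb ihc =>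
      rcases iha with rfl | ⟨t, rfl⟩ | ⟨t, rfl⟩
      · rcases ihc with rfl | ⟨t, rfl⟩ | ⟨t, rfl⟩
        · exact Or.inr (Or.inr ⟨b ++ [D], by simp⟩)
        · exact Or.inr (Or.inl ⟨t ++ U :: (b ++ [D]), by simp⟩)
        · exact Or.inr (Or.inr ⟨t ++ U :: (b ++ [D]), by simp⟩)
      · exact Or.inr (Or.inl ⟨t ++ c ++ U :: (b ++ [D]), by simp⟩)
      · exact Or.inr (Or.inr ⟨t ++ c ++ U :: (b ++ [D]), by simp⟩)

lemma cf_append₁ (p : List Step) (x : Step) (v : List Step)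
    (H0 : ∀ y : Step, p.isPrefixOf (y :: x :: v) = p.isPrefixOf [y, x])
    (hp : p.length ≤ 3) (w : List Step) :
    countFactor p ((w ++ [x]) ++ v) + countFactor p [x]
      = countFactor p (w ++ [x]) + countFactor p ([x] ++ v) := by
  apply cf_append_gen
  intro y t
  rcases t with _ | ⟨z, t⟩
  · simpa using H0 y
  · have e : y :: (z :: t ++ [x] ++ v) = (y :: (z :: t ++ [x])) ++ v := by simp
    rw [e, isPrefixOf_append_of_le]
    simp
    omega

lemma cf_cons_false {p : List Step} {x : Step} {w : List Step}
    (h : p.isPrefixOf (x :: w) = false) : countFactor p (x :: w) = countFactor p w := by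
  rw [cf_cons, h]; simp

lemma cf_cons_true {p : List Step} {x : Step} {w : List Step}
    (h : p.isPrefixOf (x :: w) = true) : countFactor p (x :: w) = 1 + countFactor p w := by
  rw [cf_cons, h]; simp

lemma redL (α β γ : List Step) (hα : DH α) (hβ : DH β) (hγ : DH γ) :
    countFactor [U,D,D] (α ++ [U, U] ++ β ++ [D] ++ γ ++ [D]) =
      countFactor [U,D,D] α + countFactor [U,D,D] β + countFactor [U,D,D] γ
        + (if β = [] ∧ γ = [] then 1 else 0)
        + (if [U, D] <:+ β then 1 else 0) + (if [U, D] <:+ γ then 1 else 0) := by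
  -- step 4 : countFactor (γ ++ [D])
  have step4 : countFactor [U,D,D] (γ ++ [D]) =
      countFactor [U,D,D] γ + (if [U, D] <:+ γ then 1 else 0) := by
    rcases dh_last2 hγ with rfl | ⟨w, rfl⟩ | ⟨w, rfl⟩
    · simp [show ¬ ([U,D] <:+ ([] : List Step)) by decide]
      decide
    · have h := cf_append₂ [U,D,D] [U,D] [D] (by simp) w
      have c1 : countFactor [U,D,D] [U,D] = 0 := by decide
      have c2 : countFactor [U,D,D] ([U,D] ++ [D]) = 1 := by decide
      have c3 : [U,D] <:+ w ++ [U,D] := ⟨w, rfl⟩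
      simp only [c3, if_pos]
      omega
    · have h := cf_append₂ [U,D,D] [D,D] [D] (by simp) w
      have c1 : countFactor [U,D,D] [D,D] = 0 := by decide
      have c2 : countFactor [U,D,D] ([D,D] ++ [D]) = 0 := by decide
      have c3 : ¬ ([U,D] <:+ w ++ [D,D]) := by
        intro hs
        have := suffix_eq_of_length hs ⟨w, rfl⟩ rfl
        simp at this
      simp only [c3, if_neg, if_false]
      omega
  have step3 : countFactor [U,D,D] (β ++ (D :: (γ ++ [D]))) =
      countFactor [U,D,D] β + (if [U, D] <:+ β then 1 else 0)
        + countFactor [U,D,D] (γ ++ [D]) := by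
    rcases dh_last2 hβ with rfl | ⟨w, rfl⟩ | ⟨w, rfl⟩
    · rw [List.nil_append, cf_cons_false (by simp [List.isPrefixOf])]
      simp [show ¬ ([U,D] <:+ ([] : List Step)) by decide]
      decide
    · have h := cf_append₂ [U,D,D] [U,D] (D :: (γ ++ [D])) (by simp) w
      have c1 : countFactor [U,D,D] [U,D] = 0 := by decide
      have c2 : countFactor [U,D,D] ([U,D] ++ (D :: (γ ++ [D]))) =
          1 + countFactor [U,D,D] (γ ++ [D]) := by
        rw [show ([U,D] ++ (D :: (γ ++ [D]))) = U :: (D :: (D :: (γ ++ [D]))) by simp]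
        rw [cf_cons_true (by simp [List.isPrefixOf]),
            cf_cons_false (by simp [List.isPrefixOf]),
            cf_cons_false (by simp [List.isPrefixOf])]
      have c3 : [U,D] <:+ w ++ [U,D] := ⟨w, rfl⟩
      simp only [c3, if_pos]
      omega
    · have h := cf_append₂ [U,D,D] [D,D] (D :: (γ ++ [D])) (by simp) w
      have c1 : countFactor [U,D,D] [D,D] = 0 := by decide
      have c2 : countFactor [U,D,D] ([D,D] ++ (D :: (γ ++ [D]))) =
          countFactor [U,D,D] (γ ++ [D]) := by
        rw [show ([D,D] ++ (D :: (γ ++ [D]))) = D :: (D :: (D :: (γ ++ [D]))) by simp]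
        rw [cf_cons_false (by simp [List.isPrefixOf]),
            cf_cons_false (by simp [List.isPrefixOf]),
            cf_cons_false (by simp [List.isPrefixOf])]
      have c3 : ¬ ([U,D] <:+ w ++ [D,D]) := by
        intro hs
        have := suffix_eq_of_length hs ⟨w, rfl⟩ rfl
        simp at this
      simp only [c3, if_neg, if_false]
      omega
  have step2 : countFactor [U,D,D] ([U,U] ++ (β ++ (D :: (γ ++ [D])))) =
      (if β = [] ∧ γ = [] then 1 else 0)
        + countFactor [U,D,D] (β ++ (D :: (γ ++ [D]))) := by
    rw [show ([U,U] ++ (β ++ (D :: (γ ++ [D])))) = U :: (U :: (β ++ (D :: (γ ++ [D])))) by simp]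
    rw [cf_cons_false (by simp [List.isPrefixOf])]
    rcases dh_head hβ with rfl | ⟨t, rfl⟩
    · rcases dh_head hγ with rfl | ⟨t, rfl⟩
      · rw [cf_cons_true (by simp [List.isPrefixOf])]
        simp
      · rw [cf_cons_false (by simp [List.isPrefixOf])]
        simp
    · rw [cf_cons_false (by simp [List.isPrefixOf])]
      simp
  have step1 : countFactor [U,D,D] (α ++ ([U,U] ++ (β ++ (D :: (γ ++ [D]))))) =
      countFactor [U,D,D] α + countFactor [U,D,D] ([U,U] ++ (β ++ (D :: (γ ++ [D])))) := by
    rcases dh_last2 hα with rfl | ⟨w, rfl⟩ | ⟨w, rfl⟩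
    · simp
      decide
    · have h := cf_append₂ [U,D,D] [U,D] ([U,U] ++ (β ++ (D :: (γ ++ [D])))) (by simp) w
      have c1 : countFactor [U,D,D] [U,D] = 0 := by decide
      have c2 : countFactor [U,D,D] ([U,D] ++ ([U,U] ++ (β ++ (D :: (γ ++ [D]))))) =
          countFactor [U,D,D] ([U,U] ++ (β ++ (D :: (γ ++ [D])))) := by
        rw [show ([U,D] ++ ([U,U] ++ (β ++ (D :: (γ ++ [D]))))) =
            U :: (D :: ([U,U] ++ (β ++ (D :: (γ ++ [D]))))) by simp]
        rw [cf_cons_false (by simp [List.isPrefixOf]),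
            cf_cons_false (by simp [List.isPrefixOf])]
      omega
    · have h := cf_append₂ [U,D,D] [D,D] ([U,U] ++ (β ++ (D :: (γ ++ [D])))) (by simp) w
      have c1 : countFactor [U,D,D] [D,D] = 0 := by decide
      have c2 : countFactor [U,D,D] ([D,D] ++ ([U,U] ++ (β ++ (D :: (γ ++ [D]))))) =
          countFactor [U,D,D] ([U,U] ++ (β ++ (D :: (γ ++ [D])))) := by
        rw [show ([D,D] ++ ([U,U] ++ (β ++ (D :: (γ ++ [D]))))) =
            D :: (D :: ([U,U] ++ (β ++ (D :: (γ ++ [D]))))) by simp]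
        rw [cf_cons_false (by simp [List.isPrefixOf]),
            cf_cons_false (by simp [List.isPrefixOf])]
      omega
  have eP : α ++ [U, U] ++ β ++ [D] ++ γ ++ [D]
      = α ++ ([U,U] ++ (β ++ (D :: (γ ++ [D])))) := by simp
  rw [eP, step1, step2, step3, step4]
  omega

lemma redL_flat (α : List Step) (hα : DH α) :
    countFactor [U,D,D] (α ++ [U, D]) = countFactor [U,D,D] α := by
  rcases dh_last2 hα with rfl | ⟨w, rfl⟩ | ⟨w, rfl⟩
  · decide
  · have h := cf_append₂ [U,D,D] [U,D] [U,D] (by simp) w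
    have c1 : countFactor [U,D,D] [U,D] = 0 := by decide
    have c2 : countFactor [U,D,D] ([U,D] ++ [U,D]) = 0 := by decide
    omega
  · have h := cf_append₂ [U,D,D] [D,D] [U,D] (by simp) w
    have c1 : countFactor [U,D,D] [D,D] = 0 := by decide
    have c2 : countFactor [U,D,D] ([D,D] ++ [U,D]) = 0 := by decide
    omega

lemma redR_flat (p a : List Step)
    (hmem : p = [F,D] ∨ p = [U,D] ∨ p = [F,U,U] ∨ p = [F,U,F])
    (ha : a = [] ∨ [F] <:+ a ∨ [D] <:+ a) :
    countFactor p (a ++ [F]) = countFactor p a := by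
  rcases ha with rfl | ⟨w, rfl⟩ | ⟨w, rfl⟩
  · rcases hmem with rfl | rfl | rfl | rfl <;> decide
  · have hlen : p.length ≤ 3 := by rcases hmem with rfl | rfl | rfl | rfl <;> simp
    have H0 : ∀ y : Step, p.isPrefixOf (y :: F :: [F]) = p.isPrefixOf [y, F] := by
      rcases hmem with rfl | rfl | rfl | rfl <;> (intro y; cases y <;> simp [List.isPrefixOf])
    have h := cf_append₁ p F [F] H0 hlen w
    have c1 : countFactor p [F] = 0 := by
      rcases hmem with rfl | rfl | rfl | rfl <;> decide
    have c2 : countFactor p ([F] ++ [F]) = 0 := by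
      rcases hmem with rfl | rfl | rfl | rfl <;> decide
    omega
  · have hlen : p.length ≤ 3 := by rcases hmem with rfl | rfl | rfl | rfl <;> simp
    have H0 : ∀ y : Step, p.isPrefixOf (y :: D :: [F]) = p.isPrefixOf [y, D] := by
      rcases hmem with rfl | rfl | rfl | rfl <;> (intro y; cases y <;> simp [List.isPrefixOf])
    have h := cf_append₁ p D [F] H0 hlen w
    have c1 : countFactor p [D] = 0 := by
      rcases hmem with rfl | rfl | rfl | rfl <;> decide
    have c2 : countFactor p ([D] ++ [F]) = 0 := by
      rcases hmem with rfl | rfl | rfl | rfl <;> decide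
    omega

lemma notF_suffix_D (w : List Step) : ¬ ([F] <:+ w ++ [D]) := by
  intro hs
  have := suffix_eq_of_length hs ⟨w, rfl⟩ rfl
  simp at this

lemma notF_nil : ¬ ([F] <:+ ([] : List Step)) := by decide

lemma redR_FD (a b c : List Step)
    (ha : a = [] ∨ [D] <:+ a)
    (hb : b = [] ∨ [F] <:+ b ∨ [D] <:+ b)
    (hc : c = [] ∨ [F] <:+ c ∨ [D] <:+ c) :
    countFactor [F,D] (a ++ c ++ U :: (b ++ [D])) =
      countFactor [F,D] a + countFactor [F,D] b + countFactor [F,D] c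
        + (if [F] <:+ b then 1 else 0) := by
  have step4 : countFactor [F,D] (b ++ [D]) =
      countFactor [F,D] b + (if [F] <:+ b then 1 else 0) := by
    rcases hb with rfl | ⟨w, rfl⟩ | ⟨w, rfl⟩
    · simp [notF_nil]; decide
    · have h := cf_append₁ [F,D] F [D]
        (by intro y; cases y <;> simp [List.isPrefixOf]) (by simp) w
      have c1 : countFactor [F,D] [F] = 0 := by decide
      have c2 : countFactor [F,D] ([F] ++ [D]) = 1 := by decide
      have c3 : [F] <:+ w ++ [F] := ⟨w, rfl⟩
      simp only [c3, if_pos]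
      omega
    · have h := cf_append₁ [F,D] D [D]
        (by intro y; cases y <;> simp [List.isPrefixOf]) (by simp) w
      have c1 : countFactor [F,D] [D] = 0 := by decide
      have c2 : countFactor [F,D] ([D] ++ [D]) = 0 := by decide
      simp only [notF_suffix_D w, if_neg, if_false]
      omega
  have stepX : countFactor [F,D] (U :: (b ++ [D])) = countFactor [F,D] (b ++ [D]) :=
    cf_cons_false (by simp [List.isPrefixOf])
  have step2 : countFactor [F,D] (c ++ (U :: (b ++ [D]))) =
      countFactor [F,D] c + countFactor [F,D] (U :: (b ++ [D])) := by
    rcases hc with rfl | ⟨w, rfl⟩ | ⟨w, rfl⟩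
    · simp
      decide
    · have h := cf_append₁ [F,D] F (U :: (b ++ [D]))
        (by intro y; cases y <;> simp [List.isPrefixOf]) (by simp) w
      have c1 : countFactor [F,D] [F] = 0 := by decide
      have c2 : countFactor [F,D] ([F] ++ (U :: (b ++ [D]))) =
          countFactor [F,D] (U :: (b ++ [D])) := by
        rw [show [F] ++ (U :: (b ++ [D])) = F :: (U :: (b ++ [D])) by simp]
        exact cf_cons_false (by simp [List.isPrefixOf])
      omega
    · have h := cf_append₁ [F,D] D (U :: (b ++ [D]))
        (by intro y; cases y <;> simp [List.isPrefixOf]) (by simp) w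
      have c1 : countFactor [F,D] [D] = 0 := by decide
      have c2 : countFactor [F,D] ([D] ++ (U :: (b ++ [D]))) =
          countFactor [F,D] (U :: (b ++ [D])) := by
        rw [show [D] ++ (U :: (b ++ [D])) = D :: (U :: (b ++ [D])) by simp]
        exact cf_cons_false (by simp [List.isPrefixOf])
      omega
  have step1 : countFactor [F,D] (a ++ (c ++ (U :: (b ++ [D])))) =
      countFactor [F,D] a + countFactor [F,D] (c ++ (U :: (b ++ [D]))) := by
    rcases ha with rfl | ⟨w, rfl⟩
    · simp
      decide
    · have h := cf_append₁ [F,D] D (c ++ (U :: (b ++ [D])))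
        (by intro y; cases y <;> simp [List.isPrefixOf]) (by simp) w
      have c1 : countFactor [F,D] [D] = 0 := by decide
      have c2 : countFactor [F,D] ([D] ++ (c ++ (U :: (b ++ [D])))) =
          countFactor [F,D] (c ++ (U :: (b ++ [D]))) := by
        rw [show [D] ++ (c ++ (U :: (b ++ [D]))) = D :: (c ++ (U :: (b ++ [D]))) by simp]
        apply cf_cons_false
        rcases c with _ | ⟨z, c⟩ <;> simp [List.isPrefixOf]
      omega
  have em : a ++ c ++ U :: (b ++ [D]) = a ++ (c ++ (U :: (b ++ [D]))) := by simp
  rw [em, step1, step2, stepX, step4]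
  omega

lemma redR_UD (a b c : List Step)
    (ha : a = [] ∨ [D] <:+ a)
    (hb : b = [] ∨ [F] <:+ b ∨ [D] <:+ b)
    (hbh : b = [] ∨ (∃ t, b = F :: t) ∨ (∃ t, b = U :: t))
    (hc : c = [] ∨ [F] <:+ c ∨ [D] <:+ c) :
    countFactor [U,D] (a ++ c ++ U :: (b ++ [D])) =
      countFactor [U,D] a + countFactor [U,D] b + countFactor [U,D] c
        + (if b = [] then 1 else 0) := by
  have step4 : countFactor [U,D] (b ++ [D]) = countFactor [U,D] b := by
    rcases hb with rfl | ⟨w, rfl⟩ | ⟨w, rfl⟩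
    · decide
    · have h := cf_append₁ [U,D] F [D]
        (by intro y; cases y <;> simp [List.isPrefixOf]) (by simp) w
      have c1 : countFactor [U,D] [F] = 0 := by decide
      have c2 : countFactor [U,D] ([F] ++ [D]) = 0 := by decide
      omega
    · have h := cf_append₁ [U,D] D [D]
        (by intro y; cases y <;> simp [List.isPrefixOf]) (by simp) w
      have c1 : countFactor [U,D] [D] = 0 := by decide
      have c2 : countFactor [U,D] ([D] ++ [D]) = 0 := by decide
      omega
  have stepX : countFactor [U,D] (U :: (b ++ [D])) =
      (if b = [] then 1 else 0) + countFactor [U,D] (b ++ [D]) := by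
    rcases hbh with rfl | ⟨t, rfl⟩ | ⟨t, rfl⟩
    · rw [cf_cons_true (by simp [List.isPrefixOf])]
      simp
    · rw [cf_cons_false (by simp [List.isPrefixOf])]
      simp
    · rw [cf_cons_false (by simp [List.isPrefixOf])]
      simp
  have step2 : countFactor [U,D] (c ++ (U :: (b ++ [D]))) =
      countFactor [U,D] c + countFactor [U,D] (U :: (b ++ [D])) := by
    rcases hc with rfl | ⟨w, rfl⟩ | ⟨w, rfl⟩
    · simp
      decide
    · have h := cf_append₁ [U,D] F (U :: (b ++ [D]))
        (by intro y; cases y <;> simp [List.isPrefixOf]) (by simp) w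
      have c1 : countFactor [U,D] [F] = 0 := by decide
      have c2 : countFactor [U,D] ([F] ++ (U :: (b ++ [D]))) =
          countFactor [U,D] (U :: (b ++ [D])) := by
        rw [show [F] ++ (U :: (b ++ [D])) = F :: (U :: (b ++ [D])) by simp]
        exact cf_cons_false (by simp [List.isPrefixOf])
      omega
    · have h := cf_append₁ [U,D] D (U :: (b ++ [D]))
        (by intro y; cases y <;> simp [List.isPrefixOf]) (by simp) w
      have c1 : countFactor [U,D] [D] = 0 := by decide
      have c2 : countFactor [U,D] ([D] ++ (U :: (b ++ [D]))) =
          countFactor [U,D] (U :: (b ++ [D])) := by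
        rw [show [D] ++ (U :: (b ++ [D])) = D :: (U :: (b ++ [D])) by simp]
        exact cf_cons_false (by simp [List.isPrefixOf])
      omega
  have step1 : countFactor [U,D] (a ++ (c ++ (U :: (b ++ [D])))) =
      countFactor [U,D] a + countFactor [U,D] (c ++ (U :: (b ++ [D]))) := by
    rcases ha with rfl | ⟨w, rfl⟩
    · simp
      decide
    · have h := cf_append₁ [U,D] D (c ++ (U :: (b ++ [D])))
        (by intro y; cases y <;> simp [List.isPrefixOf]) (by simp) w
      have c1 : countFactor [U,D] [D] = 0 := by decide
      have c2 : countFactor [U,D] ([D] ++ (c ++ (U :: (b ++ [D])))) =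
          countFactor [U,D] (c ++ (U :: (b ++ [D]))) := by
        rw [show [D] ++ (c ++ (U :: (b ++ [D]))) = D :: (c ++ (U :: (b ++ [D]))) by simp]
        apply cf_cons_false
        rcases c with _ | ⟨z, c⟩ <;> simp [List.isPrefixOf]
      omega
  have em : a ++ c ++ U :: (b ++ [D]) = a ++ (c ++ (U :: (b ++ [D]))) := by simp
  rw [em, step1, step2, stepX, step4]
  omega

lemma redR_FUU (a b c : List Step)
    (ha : a = [] ∨ [D] <:+ a)
    (hb : b = [] ∨ [F] <:+ b ∨ [D] <:+ b)
    (hbh : b = [] ∨ (∃ t, b = F :: t) ∨ (∃ t, b = U :: t))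
    (hc : c = [] ∨ [F] <:+ c ∨ [D] <:+ c) :
    countFactor [F,U,U] (a ++ c ++ U :: (b ++ [D])) =
      countFactor [F,U,U] a + countFactor [F,U,U] b + countFactor [F,U,U] c
        + (if ([F] <:+ c) ∧ b.head? = some U then 1 else 0) := by
  have step4 : countFactor [F,U,U] (b ++ [D]) = countFactor [F,U,U] b := by
    rcases hb with rfl | ⟨w, rfl⟩ | ⟨w, rfl⟩
    · decide
    · have h := cf_append₁ [F,U,U] F [D]
        (by intro y; cases y <;> simp [List.isPrefixOf]) (by simp) w
      have c1 : countFactor [F,U,U] [F] = 0 := by decide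
      have c2 : countFactor [F,U,U] ([F] ++ [D]) = 0 := by decide
      omega
    · have h := cf_append₁ [F,U,U] D [D]
        (by intro y; cases y <;> simp [List.isPrefixOf]) (by simp) w
      have c1 : countFactor [F,U,U] [D] = 0 := by decide
      have c2 : countFactor [F,U,U] ([D] ++ [D]) = 0 := by decide
      omega
  have stepX : countFactor [F,U,U] (U :: (b ++ [D])) = countFactor [F,U,U] (b ++ [D]) :=
    cf_cons_false (by simp [List.isPrefixOf])
  have step2 : countFactor [F,U,U] (c ++ (U :: (b ++ [D]))) =
      countFactor [F,U,U] c + (if ([F] <:+ c) ∧ b.head? = some U then 1 else 0)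
        + countFactor [F,U,U] (U :: (b ++ [D])) := by
    rcases hc with rfl | ⟨w, rfl⟩ | ⟨w, rfl⟩
    · simp [notF_nil]
      decide
    · have h := cf_append₁ [F,U,U] F (U :: (b ++ [D]))
        (by intro y; cases y <;> simp [List.isPrefixOf]) (by simp) w
      have c1 : countFactor [F,U,U] [F] = 0 := by decide
      have hFc : [F] <:+ w ++ [F] := ⟨w, rfl⟩
      rcases hbh with rfl | ⟨t, rfl⟩ | ⟨t, rfl⟩
      · have c2 : countFactor [F,U,U] ([F] ++ (U :: ([] ++ [D]))) =
            countFactor [F,U,U] (U :: ([] ++ [D])) := by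
          rw [show [F] ++ (U :: ([] ++ [D])) = F :: (U :: ([] ++ [D])) by simp]
          exact cf_cons_false (by simp [List.isPrefixOf])
        have hcond : ¬(([F] <:+ w ++ [F]) ∧ ([] : List Step).head? = some U) := by
          simp
        rw [if_neg hcond]
        omega
      · have c2 : countFactor [F,U,U] ([F] ++ (U :: ((F :: t) ++ [D]))) =
            countFactor [F,U,U] (U :: ((F :: t) ++ [D])) := by
          rw [show [F] ++ (U :: ((F :: t) ++ [D])) = F :: (U :: ((F :: t) ++ [D])) by simp]
          exact cf_cons_false (by simp [List.isPrefixOf])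
        have hcond : ¬(([F] <:+ w ++ [F]) ∧ (F :: t).head? = some U) := by
          simp
        rw [if_neg hcond]
        omega
      · have c2 : countFactor [F,U,U] ([F] ++ (U :: ((U :: t) ++ [D]))) =
            1 + countFactor [F,U,U] (U :: ((U :: t) ++ [D])) := by
          rw [show [F] ++ (U :: ((U :: t) ++ [D])) = F :: (U :: ((U :: t) ++ [D])) by simp]
          exact cf_cons_true (by simp [List.isPrefixOf])
        rw [if_pos ⟨hFc, rfl⟩]
        omega
    · have h := cf_append₁ [F,U,U] D (U :: (b ++ [D]))
        (by intro y; cases y <;> simp [List.isPrefixOf]) (by simp) w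
      have c1 : countFactor [F,U,U] [D] = 0 := by decide
      have c2 : countFactor [F,U,U] ([D] ++ (U :: (b ++ [D]))) =
          countFactor [F,U,U] (U :: (b ++ [D])) := by
        rw [show [D] ++ (U :: (b ++ [D])) = D :: (U :: (b ++ [D])) by simp]
        exact cf_cons_false (by simp [List.isPrefixOf])
      have hcond : ¬(([F] <:+ w ++ [D]) ∧ b.head? = some U) := by
        rintro ⟨hs, _⟩; exact notF_suffix_D w hs
      rw [if_neg hcond]
      omega
  have step1 : countFactor [F,U,U] (a ++ (c ++ (U :: (b ++ [D])))) =
      countFactor [F,U,U] a + countFactor [F,U,U] (c ++ (U :: (b ++ [D]))) := by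
    rcases ha with rfl | ⟨w, rfl⟩
    · simp
      decide
    · have h := cf_append₁ [F,U,U] D (c ++ (U :: (b ++ [D])))
        (by intro y; cases y <;> simp [List.isPrefixOf]) (by simp) w
      have c1 : countFactor [F,U,U] [D] = 0 := by decide
      have c2 : countFactor [F,U,U] ([D] ++ (c ++ (U :: (b ++ [D])))) =
          countFactor [F,U,U] (c ++ (U :: (b ++ [D]))) := by
        rw [show [D] ++ (c ++ (U :: (b ++ [D]))) = D :: (c ++ (U :: (b ++ [D]))) by simp]
        apply cf_cons_false
        rcases c with _ | ⟨z, c⟩ <;> simp [List.isPrefixOf]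
      omega
  have em : a ++ c ++ U :: (b ++ [D]) = a ++ (c ++ (U :: (b ++ [D]))) := by simp
  rw [em, step1, step2, stepX, step4]
  omega

lemma redR_FUF (a b c : List Step)
    (ha : a = [] ∨ [D] <:+ a)
    (hb : b = [] ∨ [F] <:+ b ∨ [D] <:+ b)
    (hbh : b = [] ∨ (∃ t, b = F :: t) ∨ (∃ t, b = U :: t))
    (hc : c = [] ∨ [F] <:+ c ∨ [D] <:+ c) :
    countFactor [F,U,F] (a ++ c ++ U :: (b ++ [D])) =
      countFactor [F,U,F] a + countFactor [F,U,F] b + countFactor [F,U,F] c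
        + (if ([F] <:+ c) ∧ b.head? = some F then 1 else 0) := by
  have step4 : countFactor [F,U,F] (b ++ [D]) = countFactor [F,U,F] b := by
    rcases hb with rfl | ⟨w, rfl⟩ | ⟨w, rfl⟩
    · decide
    · have h := cf_append₁ [F,U,F] F [D]
        (by intro y; cases y <;> simp [List.isPrefixOf]) (by simp) w
      have c1 : countFactor [F,U,F] [F] = 0 := by decide
      have c2 : countFactor [F,U,F] ([F] ++ [D]) = 0 := by decide
      omega
    · have h := cf_append₁ [F,U,F] D [D]
        (by intro y; cases y <;> simp [List.isPrefixOf]) (by simp) w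
      have c1 : countFactor [F,U,F] [D] = 0 := by decide
      have c2 : countFactor [F,U,F] ([D] ++ [D]) = 0 := by decide
      omega
  have stepX : countFactor [F,U,F] (U :: (b ++ [D])) = countFactor [F,U,F] (b ++ [D]) :=
    cf_cons_false (by simp [List.isPrefixOf])
  have step2 : countFactor [F,U,F] (c ++ (U :: (b ++ [D]))) =
      countFactor [F,U,F] c + (if ([F] <:+ c) ∧ b.head? = some F then 1 else 0)
        + countFactor [F,U,F] (U :: (b ++ [D])) := by
    rcases hc with rfl | ⟨w, rfl⟩ | ⟨w, rfl⟩
    · simp [notF_nil]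
      decide
    · have h := cf_append₁ [F,U,F] F (U :: (b ++ [D]))
        (by intro y; cases y <;> simp [List.isPrefixOf]) (by simp) w
      have c1 : countFactor [F,U,F] [F] = 0 := by decide
      have hFc : [F] <:+ w ++ [F] := ⟨w, rfl⟩
      rcases hbh with rfl | ⟨t, rfl⟩ | ⟨t, rfl⟩
      · have c2 : countFactor [F,U,F] ([F] ++ (U :: ([] ++ [D]))) =
            countFactor [F,U,F] (U :: ([] ++ [D])) := by
          rw [show [F] ++ (U :: ([] ++ [D])) = F :: (U :: ([] ++ [D])) by simp]
          exact cf_cons_false (by simp [List.isPrefixOf])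
        have hcond : ¬(([F] <:+ w ++ [F]) ∧ ([] : List Step).head? = some F) := by
          simp
        rw [if_neg hcond]
        omega
      · have c2 : countFactor [F,U,F] ([F] ++ (U :: ((F :: t) ++ [D]))) =
            1 + countFactor [F,U,F] (U :: ((F :: t) ++ [D])) := by
          rw [show [F] ++ (U :: ((F :: t) ++ [D])) = F :: (U :: ((F :: t) ++ [D])) by simp]
          exact cf_cons_true (by simp [List.isPrefixOf])
        rw [if_pos ⟨hFc, rfl⟩]
        omega
      · have c2 : countFactor [F,U,F] ([F] ++ (U :: ((U :: t) ++ [D]))) =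
            countFactor [F,U,F] (U :: ((U :: t) ++ [D])) := by
          rw [show [F] ++ (U :: ((U :: t) ++ [D])) = F :: (U :: ((U :: t) ++ [D])) by simp]
          exact cf_cons_false (by simp [List.isPrefixOf])
        have hcond : ¬(([F] <:+ w ++ [F]) ∧ (U :: t).head? = some F) := by
          simp
        rw [if_neg hcond]
        omega
    · have h := cf_append₁ [F,U,F] D (U :: (b ++ [D]))
        (by intro y; cases y <;> simp [List.isPrefixOf]) (by simp) w
      have c1 : countFactor [F,U,F] [D] = 0 := by decide
      have c2 : countFactor [F,U,F] ([D] ++ (U :: (b ++ [D]))) =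
          countFactor [F,U,F] (U :: (b ++ [D])) := by
        rw [show [D] ++ (U :: (b ++ [D])) = D :: (U :: (b ++ [D])) by simp]
        exact cf_cons_false (by simp [List.isPrefixOf])
      have hcond : ¬(([F] <:+ w ++ [D]) ∧ b.head? = some F) := by
        rintro ⟨hs, _⟩; exact notF_suffix_D w hs
      rw [if_neg hcond]
      omega
  have step1 : countFactor [F,U,F] (a ++ (c ++ (U :: (b ++ [D])))) =
      countFactor [F,U,F] a + countFactor [F,U,F] (c ++ (U :: (b ++ [D]))) := by
    rcases ha with rfl | ⟨w, rfl⟩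
    · simp
      decide
    · have h := cf_append₁ [F,U,F] D (c ++ (U :: (b ++ [D])))
        (by intro y; cases y <;> simp [List.isPrefixOf]) (by simp) w
      have c1 : countFactor [F,U,F] [D] = 0 := by decide
      have c2 : countFactor [F,U,F] ([D] ++ (c ++ (U :: (b ++ [D])))) =
          countFactor [F,U,F] (c ++ (U :: (b ++ [D]))) := by
        rw [show [D] ++ (c ++ (U :: (b ++ [D]))) = D :: (c ++ (U :: (b ++ [D]))) by simp]
        apply cf_cons_false
        rcases c with _ | ⟨z, c⟩ <;> simp [List.isPrefixOf]
      omega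
  have em : a ++ c ++ U :: (b ++ [D]) = a ++ (c ++ (U :: (b ++ [D]))) := by simp
  rw [em, step1, step2, stepX, step4]
  omega

lemma up_facts {α β γ : List Step} (hα : DH α) (hβ : DH β) (hγ : DH γ)
    (hP : DH (α ++ [U, U] ++ β ++ [D] ++ γ ++ [D])) :
    ¬ ([U, D] <:+ α) ∧ (β = [] → γ = [] ∨ [U, D] <:+ γ) := by
  have eP : α ++ [U, U] ++ β ++ [D] ++ γ ++ [D]
      = α ++ ([U,U] ++ (β ++ ([D] ++ (γ ++ [D])))) := by simp
  rw [eP] at hP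
  obtain ⟨hV, hbd⟩ := dh_split hP hα
  constructor
  · intro hud
    have h1 := hbd hud
    have h2 : 2 ≤ height ([U,U] ++ (β ++ ([D] ++ (γ ++ [D])))) :=
      height_two_le ⟨β ++ ([D] ++ (γ ++ [D])), rfl⟩
    omega
  · rintro rfl
    have hV' : DH (U :: (((U :: (([] ++ [D]) ++ γ)) ++ [D]) ++ [])) := by
      have e : ([U,U] ++ (([] : List Step) ++ ([D] ++ (γ ++ [D]))))
          = U :: (((U :: (([] ++ [D]) ++ γ)) ++ [D]) ++ []) := by simp
      rwa [e] at hV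
    obtain ⟨hbγ, hpγ⟩ := dh_balanced hγ
    have hbal : (U :: (([] ++ [D]) ++ γ)).count U = (U :: (([] ++ [D]) ++ γ)).count D := by
      simp [List.count_cons, List.count_append]
      omega
    have hpos : ∀ p : List Step, p <+: U :: (([] ++ [D]) ++ γ) →
        p.count D ≤ p.count U := by
      intro p hp
      rcases p with _ | ⟨x, p⟩
      · simp
      · rcases List.cons_prefix_cons.1 hp with ⟨rfl, hp'⟩
        rcases prefix_append_cases hp' with h1 | ⟨q, hq, rfl⟩
        · rcases p with _ | ⟨z, p⟩
          · simp
          · obtain ⟨rfl, rfl⟩ : z = D ∧ p = [] := by simpa using h1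
            simp [List.count_cons]
        · have := hpγ _ hq
          simp [List.count_cons, List.count_append]
          omega
    obtain ⟨hA, -, -⟩ := dh_inv hV' hbal hpos
    have hinv2 := dh_inv (A := []) (B := γ) (by simpa using hA) rfl
      (by intro p hp; rw [List.prefix_nil.1 hp]; simp)
    obtain ⟨-, -, hht⟩ := hinv2
    have h1 : height (U :: (([] : List Step) ++ [D])) = 1 := by decide
    rcases eq_or_ne γ [] with rfl | hγne
    · exact Or.inl rfl
    · exact Or.inr (dh_height1 hγ (by omega) hγne)

theorem aux (P m : List Step) (hphi : Phi P m) : DH P →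
    countFactor [U, D, D] P =
      countFactor [F, D] m + countFactor [U, D] m +
        countFactor [F, U, U] m + countFactor [F, U, F] m := by
  induction hphi with
  | nil => intro _; decide
  | flat α a hα hphia ih =>
      intro _
      have ha := phi_lastD hphia
      rw [redL_flat α hα,
          redR_flat [F,D] a (by tauto) ha, redR_flat [U,D] a (by tauto) ha,
          redR_flat [F,U,U] a (by tauto) ha, redR_flat [F,U,F] a (by tauto) ha]
      exact ih hα
  | up α β γ a b c hα hβ hγ pα pβ pγ ihα ihβ ihγ =>
      intro hP
      obtain ⟨notUDα, hF2⟩ := up_facts hα hβ hγ hP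
      have ha : a = [] ∨ [D] <:+ a := by
        rcases phi_lastD pα with h | h | h
        · exact Or.inl h
        · exact absurd ((phi_lastF pα).1 h) notUDα
        · exact Or.inr h
      have hb := phi_lastD pβ
      have hc := phi_lastD pγ
      have hbh : b = [] ∨ (∃ t, b = F :: t) ∨ (∃ t, b = U :: t) := phi_head pβ
      rw [redL α β γ hα hβ hγ,
          redR_FD a b c ha hb hc, redR_UD a b c ha hb hbh hc,
          redR_FUU a b c ha hb hbh hc, redR_FUF a b c ha hb hbh hc,
          ihα hα, ihβ hβ, ihγ hγ]
      have e2 : ([U,D] <:+ β) ↔ ([F] <:+ b) := (phi_lastF pβ).symm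
      have e3 : ([U,D] <:+ γ) ↔ ([F] <:+ c) := (phi_lastF pγ).symm
      have en2 : β = [] ↔ b = [] := phi_nil pβ
      have en3 : γ = [] ↔ c = [] := phi_nil pγ
      have v2 : (if [U,D] <:+ β then 1 else 0) = (if [F] <:+ b then (1:ℕ) else 0) := by
        by_cases h : [F] <:+ b
        · rw [if_pos (e2.2 h), if_pos h]
        · rw [if_neg (fun hh => h (e2.1 hh)), if_neg h]
      have v3 : (if [U,D] <:+ γ then 1 else 0) = (if [F] <:+ c then (1:ℕ) else 0) := by
        by_cases h : [F] <:+ c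
        · rw [if_pos (e3.2 h), if_pos h]
        · rw [if_neg (fun hh => h (e3.1 hh)), if_neg h]
      have v1 : (if β = [] ∧ γ = [] then 1 else 0) = (if b = [] ∧ c = [] then (1:ℕ) else 0) := by
        by_cases h : b = [] ∧ c = []
        · rw [if_pos ⟨en2.2 h.1, en3.2 h.2⟩, if_pos h]
        · rw [if_neg (fun hh => h ⟨en2.1 hh.1, en3.1 hh.2⟩), if_neg h]
      rw [v1, v2, v3]
      have hF2' : b = [] → c = [] ∨ [F] <:+ c := by
        intro h
        rcases hF2 (en2.2 h) with h1 | h1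
        · exact Or.inl (en3.1 h1)
        · exact Or.inr (e3.1 h1)
      have A1 : (if b = [] ∧ c = [] then (1:ℕ) else 0)
          + ((if [F] <:+ b then (1:ℕ) else 0) + (if [F] <:+ c then (1:ℕ) else 0))
        = (if [F] <:+ b then (1:ℕ) else 0) + (if b = [] then (1:ℕ) else 0)
          + ((if ([F] <:+ c) ∧ b.head? = some U then (1:ℕ) else 0)
          + (if ([F] <:+ c) ∧ b.head? = some F then (1:ℕ) else 0)) := by
        by_cases hFc : [F] <:+ c
        · have hcne : c ≠ [] := by rintro rfl; exact notF_nil hFc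
          rcases hbh with rfl | ⟨t, rfl⟩ | ⟨t, rfl⟩
          · rcases hF2' rfl with rfl | h
            · exact absurd rfl hcne
            · simp [hFc, notF_nil, hcne]
          · simp [hFc]
          · simp [hFc]
        · rcases hbh with rfl | ⟨t, rfl⟩ | ⟨t, rfl⟩
          · rcases hF2' rfl with rfl | h
            · simp [notF_nil, hFc]
            · exact absurd h hFc
          · simp [hFc]
          · simp [hFc]
      omega

/-- φ transports UDD: #UDD(P) = #FD(φP) + #UD(φP) + #FUU(φP) + #FUF(φP). -/
theorem stmt17 (n : ℕ) (P m : List Step) (hP : DH P) (hlen : P.length = 2 * n)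
    (hphi : Phi P m) :
    countFactor [Step.U, Step.D, Step.D] P =
      countFactor [Step.F, Step.D] m + countFactor [Step.U, Step.D] m +
        countFactor [Step.F, Step.U, Step.U] m +
        countFactor [Step.F, Step.U, Step.F] m := by exact aux P m hphi hP
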